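/- Let p be a prime and let a be an integer with 1 ≤ a < p. Then for every integer k with 1 ≤ k ≤ p − 1, gcd(⌈k(p−a)/p⌉, k) = gcd(k·a mod p, k), where k·a mod p denotes the least nonnegative residue of k·a modulo p. -/

import Mathlib

lemma gcd_add_mul_aux (x t k : ℤ) : Int.gcd (x + t * k) k = Int.gcd x k := by
  apply Nat.dvd_antisymm
  · rw [← Int.natCast_dvd_natCast]
    apply Int.dvd_coe_gcd
    · have h1 : (↑(Int.gcd (x + t * k) k) : ℤ) ∣ (x + t * k) := Int.gcd_dvd_left _ _
      have h2 : (↑(Int.gcd (x + t * k) k) : ℤ) ∣ k := Int.gcd_dvd_right _ _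
      have := dvd_sub h1 (h2.mul_left t)
      simpa using this
    · exact Int.gcd_dvd_right _ _
  · rw [← Int.natCast_dvd_natCast]
    apply Int.dvd_coe_gcd
    · exact dvd_add (Int.gcd_dvd_left _ _) ((Int.gcd_dvd_right _ _).mul_left t)
    · exact Int.gcd_dvd_right _ _

/-- For a prime `p`, `1 ≤ a < p` and `1 ≤ k ≤ p − 1`:
`gcd(⌈k(p−a)/p⌉, k) = gcd(k·a mod p, k)`. -/
theorem gcd_ceil_eq_gcd_mod (p a k : ℤ) (hp : Prime p) (ha : 1 ≤ a)
    (hap : a < p) (hk : 1 ≤ k) (hkp : k ≤ p - 1) :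
    Int.gcd ⌈(k * (p - a) : ℚ) / (p : ℚ)⌉ k = Int.gcd ((k * a) % p) k := by
  have hp0 : (0:ℤ) < p := by linarith
  have hpq : ((p:ℚ)) ≠ 0 := by exact_mod_cast hp0.ne'
  set f : ℤ := (k * a) / p with hf
  -- compute the ceiling
  have hfl : ⌊((k * a : ℤ) : ℚ) / (p : ℚ)⌋ = f := by
    have hpn : p = ((p.toNat : ℕ) : ℤ) := by simp [Int.toNat_of_nonneg hp0.le]
    rw [hf, hpn]
    exact_mod_cast Rat.floor_intCast_div_natCast (k * a) p.toNat
  have hceil : ⌈(k * (p - a) : ℚ) / (p : ℚ)⌉ = k - f := by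
    have h1 : (k * (p - a) : ℚ) / (p : ℚ) = -(((k * a : ℤ) : ℚ) / (p : ℚ)) + (k : ℤ) := by
      push_cast
      field_simp
      ring
    rw [h1, Int.ceil_add_intCast, Int.ceil_neg, hfl]
    ring
  have hmod : (k * a) % p = k * a - p * f := by
    rw [hf, Int.emod_def]
  rw [hceil, hmod]
  -- both sides equal gcd f k, using gcd p k = 1
  have hcop : Int.gcd p k = 1 := by
    have hppn : p.natAbs.Prime := Int.prime_iff_natAbs_prime.mp hp
    show Nat.gcd p.natAbs k.natAbs = 1
    apply (Nat.Prime.coprime_iff_not_dvd hppn).mpr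
    intro hdvd
    have := Nat.le_of_dvd (by omega) hdvd
    omega
  have h2 : Int.gcd (k - f) k = Int.gcd f k := by
    rw [show k - f = -f + 1 * k by ring, gcd_add_mul_aux, Int.neg_gcd]
  have h3 : Int.gcd (k * a - p * f) k = Int.gcd f k := by
    rw [show k * a - p * f = -(p * f) + a * k by ring, gcd_add_mul_aux, Int.neg_gcd]
    have hc : Nat.Coprime p.natAbs k.natAbs := hcop
    show Nat.gcd (p * f).natAbs k.natAbs = Nat.gcd f.natAbs k.natAbs
    rw [Int.natAbs_mul]
    exact Nat.Coprime.gcd_mul_left_cancel f.natAbs hc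
  rw [h2, h3]
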